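/- Let X be a complete CAT(0) space and let E ⊆ E' ⊆ X be two nonempty bounded closed convex subsets. Let ρ (respectively ρ') be the circumradius of E (respectively E'), and let c (respectively c') be a circumcentre of E (respectively E'), i.e. a point with E ⊆ B̄(c,ρ) and E' ⊆ B̄(c',ρ'). Then d(c', c) ≤ √2 · √(ρ'² − ρ²). -/
import Mathlib


/-- A map `σ : ℝ → X` is a geodesic (isometric) on the interval `[a, b]`. -/
def IsGeodesicOn {X : Type*} [MetricSpace X] (σ : ℝ → X) (a b : ℝ) : Prop :=
  ∀ s ∈ Set.Icc a b, ∀ t ∈ Set.Icc a b, dist (σ s) (σ t) = |s - t|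

/-- A geodesic metric space: any two points are joined by a geodesic segment. -/
def IsGeodesicSpace (X : Type*) [MetricSpace X] : Prop :=
  ∀ x y : X, ∃ σ : ℝ → X, IsGeodesicOn σ 0 (dist x y) ∧ σ 0 = x ∧ σ (dist x y) = y

/-- A CAT(0) space: a geodesic space satisfying the CN inequality of Bruhat–Tits
for all (metric) midpoints. -/
def IsCAT0 (X : Type*) [MetricSpace X] : Prop :=
  IsGeodesicSpace X ∧
    ∀ x c c' m : X, dist m c = dist c c' / 2 → dist m c' = dist c c' / 2 →
      2 * dist m x ^ 2 ≤ dist c' x ^ 2 + dist c x ^ 2 - dist c' c ^ 2 / 2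

/-- A subset of a metric space is (geodesically) convex if it contains every geodesic
segment joining any two of its points. -/
def GConvex {X : Type*} [MetricSpace X] (A : Set X) : Prop :=
  ∀ (σ : ℝ → X) (a b : ℝ), a ≤ b → IsGeodesicOn σ a b → σ a ∈ A → σ b ∈ A →
    ∀ t ∈ Set.Icc a b, σ t ∈ A

/-- `ρ` is an action of the group `G` on `X` by isometries. -/
def IsIsometricAction {G X : Type*} [Group G] [MetricSpace X] (ρ : G → X → X) : Prop :=
  (∀ x, ρ 1 x = x) ∧ (∀ g h x, ρ (g * h) x = ρ g (ρ h x)) ∧ ∀ g : G, Isometry (ρ g)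

/-- A subset `T ⊆ X` is `Q`-evanescent: the set of displacements `d(g x, x)`,
`g ∈ Q`, `x ∈ T`, is bounded. -/
def QEvanescent {G X : Type*} [MetricSpace X] (ρ : G → X → X) (Q : Set G) (T : Set X) : Prop :=
  ∃ C : ℝ, ∀ g ∈ Q, ∀ x ∈ T, dist (ρ g x) x ≤ C

/-- The action is evanescent: there is an unbounded set which is `Q`-evanescent
for every compact `Q ⊆ G`. -/
def Evanescent {G X : Type*} [TopologicalSpace G] [MetricSpace X] (ρ : G → X → X) : Prop :=
  ∃ T : Set X, ¬ Bornology.IsBounded T ∧ ∀ Q : Set G, IsCompact Q → QEvanescent ρ Q T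

/-- The action is weakly evanescent: for every compact `Q ⊆ G` there is an unbounded
`Q`-evanescent set. -/
def WeaklyEvanescent {G X : Type*} [TopologicalSpace G] [MetricSpace X] (ρ : G → X → X) : Prop :=
  ∀ Q : Set G, IsCompact Q → ∃ T : Set X, ¬ Bornology.IsBounded T ∧ QEvanescent ρ Q T

/-- The circumradius of a subset `A` of a metric space: the infimum of all `r > 0`
such that `A` is contained in some closed ball of radius `r`. -/
noncomputable def circumradius {X : Type*} [MetricSpace X] (A : Set X) : ℝ :=
  sInf {r : ℝ | 0 < r ∧ ∃ x : X, A ⊆ Metric.closedBall x r}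

/-- Monod, Lemma on circumcentres: if `E ⊆ E'` are nonempty bounded closed convex subsets
of a complete CAT(0) space, with circumradii `ρ ≤ ρ'` and circumcentres `c, c'`,
then `d(c', c) ≤ √2 · √(ρ'² − ρ²)`. -/
theorem circumcentre_distance_le
    {X : Type*} [MetricSpace X] [CompleteSpace X] (hX : IsCAT0 X)
    (E E' : Set X) (hEE' : E ⊆ E')
    (hEne : E.Nonempty) (hE'ne : E'.Nonempty)
    (hEbdd : Bornology.IsBounded E) (hE'bdd : Bornology.IsBounded E')
    (hEcl : IsClosed E) (hE'cl : IsClosed E')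
    (hEcv : GConvex E) (hE'cv : GConvex E')
    (ρ ρ' : ℝ) (hρ : ρ = circumradius E) (hρ' : ρ' = circumradius E')
    (c c' : X) (hc : E ⊆ Metric.closedBall c ρ) (hc' : E' ⊆ Metric.closedBall c' ρ') :
    dist c' c ≤ Real.sqrt 2 * Real.sqrt (ρ' ^ 2 - ρ ^ 2) := by
  obtain ⟨hgeo, hCN⟩ := hX
  obtain ⟨σ, hσ, hσ0, hσd⟩ := hgeo c c'
  set d := dist c c' with hd
  have hd0 : 0 ≤ d := dist_nonneg
  set m := σ (d/2) with hm
  have hmem : d/2 ∈ Set.Icc (0:ℝ) d := ⟨by linarith, by linarith⟩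
  have h0mem : (0:ℝ) ∈ Set.Icc (0:ℝ) d := ⟨le_refl _, hd0⟩
  have hdmem : d ∈ Set.Icc (0:ℝ) d := ⟨hd0, le_refl _⟩
  have hmc : dist m c = dist c c' / 2 := by
    have h := hσ (d/2) hmem 0 h0mem
    rw [hσ0] at h
    rw [hm, h, ← hd, abs_of_nonneg (by linarith : (0:ℝ) ≤ d/2 - 0)]
    ring
  have hmc' : dist m c' = dist c c' / 2 := by
    have h := hσ (d/2) hmem d hdmem
    rw [hσd] at h
    rw [hm, h, ← hd, abs_of_nonpos (by linarith : d/2 - d ≤ 0)]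
    ring
  obtain ⟨x0, hx0⟩ := hEne
  have hρ0 : 0 ≤ ρ := le_trans dist_nonneg (Metric.mem_closedBall.mp (hc hx0))
  have hρ'0 : 0 ≤ ρ' := le_trans dist_nonneg (Metric.mem_closedBall.mp (hc' (hEE' hx0)))
  set K : ℝ := (ρ'^2 + ρ^2)/2 - d^2/4 with hK
  have key : ∀ x ∈ E, dist m x ^ 2 ≤ K := by
    intro x hx
    have h1 := hCN x c c' m hmc hmc'
    have h2 : dist c x ≤ ρ := by
      have := Metric.mem_closedBall.mp (hc hx); rwa [dist_comm]
    have h3 : dist c' x ≤ ρ' := by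
      have := Metric.mem_closedBall.mp (hc' (hEE' hx)); rwa [dist_comm]
    have h4 : dist c x ^ 2 ≤ ρ^2 := pow_le_pow_left₀ dist_nonneg h2 2
    have h5 : dist c' x ^ 2 ≤ ρ'^2 := pow_le_pow_left₀ dist_nonneg h3 2
    have h6 : dist c' c = d := by rw [hd, dist_comm]
    rw [h6] at h1
    rw [hK]
    nlinarith
  have hK0 : 0 ≤ K := le_trans (sq_nonneg _) (key x0 hx0)
  have hdist_le : ∀ x ∈ E, dist x m ≤ Real.sqrt K := by
    intro x hx
    calc dist x m = Real.sqrt (dist m x ^ 2) := by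
          rw [Real.sqrt_sq dist_nonneg, dist_comm]
      _ ≤ Real.sqrt K := Real.sqrt_le_sqrt (key x hx)
  have hbdd : BddBelow {r : ℝ | 0 < r ∧ ∃ x : X, E ⊆ Metric.closedBall x r} :=
    ⟨0, fun r hr => le_of_lt hr.1⟩
  have hρle : ρ ≤ Real.sqrt K := by
    have hsq : 0 ≤ Real.sqrt K := Real.sqrt_nonneg K
    refine le_of_forall_pos_le_add ?_
    intro ε hε
    rw [hρ]
    refine csInf_le hbdd ⟨by linarith, m, fun x hx => ?_⟩
    exact Metric.mem_closedBall.mpr (le_trans (hdist_le x hx) (by linarith))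
  have hρ2 : ρ ^ 2 ≤ K := by
    have := pow_le_pow_left₀ hρ0 hρle 2
    rwa [Real.sq_sqrt hK0] at this
  have hd2 : d ^ 2 ≤ 2 * (ρ'^2 - ρ^2) := by rw [hK] at hρ2; nlinarith
  have hrhs : Real.sqrt 2 * Real.sqrt (ρ'^2 - ρ^2) = Real.sqrt (2 * (ρ'^2 - ρ^2)) :=
    (Real.sqrt_mul (by norm_num) _).symm
  have hfin : dist c' c = d := by rw [hd, dist_comm]
  rw [hfin, hrhs]
  calc d = Real.sqrt (d ^ 2) := (Real.sqrt_sq hd0).symm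
    _ ≤ Real.sqrt (2 * (ρ' ^ 2 - ρ ^ 2)) := Real.sqrt_le_sqrt hd2
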